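/- arXiv:1208.1199 — 4 statements merged into one kernel-verified Lean document; each statement's English description precedes it below -/
import Mathlib

section
/- Let y, b ∈ W^{1,1}(0,T) satisfy y'(t) = g(y(t)) + b'(t) on [0,T] with y(0) = y⁰, where g ∈ C(ℝ) with g(ζ) → -∞ as ζ → ∞. Suppose b(t₂) - b(t₁) ≤ N₀ + N₁(t₂ - t₁) for all 0 ≤ t₁ < t₂ ≤ T, with constants N₀ ≥ 0, N₁ ≥ 0. If ζ̄ is a constant such that g(ζ) ≤ -N₁ for all ζ ≥ ζ̄, then y(t) ≤ max{y⁰, ζ̄} + N₀ for all t ∈ [0,T]. -/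
open Set Filter
open Topology

/-- Zlotnik's inequality (Appendix A). -/
theorem zlotnik_inequality (T y0 N0 N1 ζbar : ℝ) (hT : 0 < T)
    (hN0 : 0 ≤ N0) (hN1 : 0 ≤ N1)
    (g : ℝ → ℝ) (hg : Continuous g)
    (hgtop : Tendsto g atTop atBot)
    (y b y' b' : ℝ → ℝ)
    (hy : ∀ t ∈ Icc (0:ℝ) T, HasDerivAt y (y' t) t)
    (hb : ∀ t ∈ Icc (0:ℝ) T, HasDerivAt b (b' t) t)
    (heq : ∀ t ∈ Icc (0:ℝ) T, y' t = g (y t) + b' t)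
    (hy0 : y 0 = y0)
    (hbd : ∀ t1 t2 : ℝ, 0 ≤ t1 → t1 < t2 → t2 ≤ T →
      b t2 - b t1 ≤ N0 + N1 * (t2 - t1))
    (hζ : ∀ ζ : ℝ, ζbar ≤ ζ → g ζ ≤ -N1) :
    ∀ t ∈ Icc (0:ℝ) T, y t ≤ max y0 ζbar + N0 := by
  set M := max y0 ζbar with hM
  by_contra hcon
  push_neg at hcon
  obtain ⟨t2, ht2, hyt2⟩ := hcon
  have hy0M : y 0 ≤ M := by rw [hy0]; exact le_max_left _ _
  set S : Set ℝ := {t | t ∈ Icc (0:ℝ) t2 ∧ y t ≤ M} with hSdef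
  have h0S : (0:ℝ) ∈ S := ⟨⟨le_refl 0, ht2.1⟩, hy0M⟩
  have hSne : S.Nonempty := ⟨0, h0S⟩
  have hSbdd : BddAbove S := ⟨t2, fun x hx => hx.1.2⟩
  set s := sSup S with hs
  have hs_mem : s ∈ Icc (0:ℝ) t2 :=
    ⟨le_csSup hSbdd h0S, csSup_le hSne fun x hx => hx.1.2⟩
  have hsT : s ∈ Icc (0:ℝ) T := ⟨hs_mem.1, hs_mem.2.trans ht2.2⟩
  have hys : y s ≤ M := by
    have hclos : s ∈ closure S := csSup_mem_closure hSne hSbdd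
    have hne : (𝓝[S] s).NeBot := mem_closure_iff_nhdsWithin_neBot.mp hclos
    have hcont : ContinuousAt y s := (hy s hsT).continuousAt
    have htend : Tendsto y (𝓝[S] s) (𝓝 (y s)) :=
      hcont.tendsto.mono_left nhdsWithin_le_nhds
    exact le_of_tendsto htend (eventually_nhdsWithin_of_forall fun x hx => hx.2)
  have hst2 : s < t2 := by
    rcases lt_or_eq_of_le hs_mem.2 with h | h
    · exact h
    · exfalso
      rw [h] at hys
      have : M + N0 < M := lt_of_lt_of_le hyt2 (le_trans hys (by linarith))
      linarith
  -- on (s, t2], y t > M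
  have hgt : ∀ t ∈ Ioc s t2, M < y t := by
    intro t ht
    by_contra hle
    push_neg at hle
    have htS : t ∈ S := ⟨⟨le_trans hs_mem.1 ht.1.le, ht.2⟩, hle⟩
    exact absurd (le_csSup hSbdd htS) (not_le.mpr ht.1)
  -- the auxiliary function
  set h : ℝ → ℝ := fun t => y t - b t + N1 * t with hhdef
  have hIcc_sub : Icc s t2 ⊆ Icc (0:ℝ) T :=
    fun x hx => ⟨le_trans hs_mem.1 hx.1, le_trans hx.2 ht2.2⟩
  have hcontOn : ContinuousOn h (Icc s t2) := by
    intro x hx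
    have hx' := hIcc_sub hx
    exact (((hy x hx').sub (hb x hx')).add
      ((hasDerivAt_id x).const_mul N1)).continuousAt.continuousWithinAt
  have hderiv : ∀ t ∈ Ioo s t2, HasDerivAt h (g (y t) + N1) t := by
    intro t ht
    have ht' : t ∈ Icc (0:ℝ) T := hIcc_sub ⟨ht.1.le, ht.2.le⟩
    have := ((hy t ht').sub (hb t ht')).add ((hasDerivAt_id t).const_mul N1)
    have heq' : y' t - b' t + N1 * 1 = g (y t) + N1 := by
      rw [heq t ht']; ring
    rw [heq'] at this
    exact this
  have hanti : AntitoneOn h (Icc s t2) := by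
    apply antitoneOn_of_deriv_nonpos (convex_Icc s t2) hcontOn
    · intro t ht
      rw [interior_Icc] at ht
      exact (hderiv t ht).differentiableAt.differentiableWithinAt
    · intro t ht
      rw [interior_Icc] at ht
      rw [(hderiv t ht).deriv]
      have hyt : ζbar ≤ y t :=
        le_trans (le_max_right y0 ζbar) (hgt t ⟨ht.1, ht.2.le⟩).le
      have := hζ (y t) hyt
      linarith
  have hkey : h t2 ≤ h s :=
    hanti (left_mem_Icc.mpr hst2.le) (right_mem_Icc.mpr hst2.le) hst2.le
  have hb' : b t2 - b s ≤ N0 + N1 * (t2 - s) := hbd s t2 hsT.1 hst2 ht2.2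
  simp only [hhdef] at hkey
  have : y t2 ≤ M + N0 := by linarith
  linarith
end

section
/- Let ρ : ℝ³ × [0,∞) → ℝ and u, θ with: 0 ≤ ρ(x,t) ≤ C_b for all (x,t), ∫_{ℝ³} ρ(x,t) dx = ∫_{ℝ³} ρ₀(x) dx for all t with ρ₀ ∈ L¹(ℝ³), ∫₀^∞ ‖∇u(·,t)‖²_{L²(ℝ³)} dt ≤ C_b², and u(·,t) ∈ L⁶(ℝ³) with the Sobolev inequality ‖u‖_{L⁶} ≤ C_S ‖∇u‖_{L²}. If the momentum is conserved, i.e. ∫_{ℝ³} ρ u dx = ∫_{ℝ³} ρ₀ u₀ dx for all t > 0, then ∫_{ℝ³} ρ₀ u₀ dx = 0. -/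
open Set MeasureTheory
open ENNReal

noncomputable abbrev E3 : Type := EuclideanSpace ℝ (Fin 3)

/-- Proposition 5.1, momentum case: a globally bounded solution conserving mass and
momentum, with Dirichlet energy integrable in time, must have zero initial momentum. -/
theorem initial_momentum_zero
    (Cb CS : ℝ) (hCb : 0 < Cb) (hCS : 0 < CS)
    (ρ : ℝ → E3 → ℝ) (u : ℝ → E3 → E3) (ρ0 : E3 → ℝ) (u0 : E3 → E3)
    (hρbd : ∀ t : ℝ, 0 ≤ t → ∀ x : E3, 0 ≤ ρ t x ∧ ρ t x ≤ Cb)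
    (hρ0int : Integrable ρ0 volume)
    (hρint : ∀ t : ℝ, 0 ≤ t → Integrable (ρ t) volume)
    (hmass : ∀ t : ℝ, 0 ≤ t → (∫ x, ρ t x) = ∫ x, ρ0 x)
    (Du : ℝ → ℝ) (hDu0 : ∀ t, 0 ≤ Du t)
    (hDuint : IntegrableOn (fun t => (Du t) ^ 2) (Ioi (0:ℝ)) volume)
    (hDu : (∫ t in Ioi (0:ℝ), (Du t) ^ 2) ≤ Cb ^ 2)
    (hu6 : ∀ t : ℝ, 0 ≤ t → MemLp (u t) 6 volume)
    (hSob : ∀ t : ℝ, 0 ≤ t → (eLpNorm (u t) 6 volume).toReal ≤ CS * Du t)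
    (hmomint : ∀ t : ℝ, 0 ≤ t → Integrable (fun x => ρ t x • u t x) volume)
    (hmom : ∀ t : ℝ, 0 < t → (∫ x, ρ t x • u t x) = ∫ x, ρ0 x • u0 x) :
    (∫ x, ρ0 x • u0 x) = 0 := by
  set m : ℝ := ∫ x, ρ0 x with hm
  have hm0 : 0 ≤ m := by
    rw [← hmass 0 le_rfl]
    exact integral_nonneg fun x => (hρbd 0 le_rfl x).1
  set K : ℝ := (Cb ^ ((1:ℝ)/5) * m) ^ ((5:ℝ)/6) * CS with hK
  have hK0 : 0 ≤ K := by
    apply mul_nonneg _ hCS.le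
    exact Real.rpow_nonneg (mul_nonneg (Real.rpow_nonneg hCb.le _) hm0) _
  set M : ℝ := ‖∫ x, ρ0 x • u0 x‖ with hM
  -- key bound : M ≤ K * Du t for all t > 0
  have key : ∀ t : ℝ, 0 < t → M ≤ K * Du t := by
    intro t ht
    have ht' : (0:ℝ) ≤ t := ht.le
    have hρm : AEStronglyMeasurable (ρ t) volume := (hρint t ht').1
    have hum : AEStronglyMeasurable (u t) volume := (hu6 t ht').1
    -- ρ(t) ∈ L^{6/5} bound
    have hρLp : eLpNorm (ρ t) (6/5) volume ≤
        ENNReal.ofReal ((Cb ^ ((1:ℝ)/5) * m) ^ ((5:ℝ)/6)) := by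
      have h65 : ((6:ℝ≥0∞)/5) ≠ 0 := by norm_num
      have h65' : ((6:ℝ≥0∞)/5) ≠ ∞ := by
        simp [ENNReal.div_eq_top]
      rw [eLpNorm_eq_lintegral_rpow_enorm_toReal h65 h65']
      have htr : ((6:ℝ≥0∞)/5).toReal = 6/5 := by
        rw [ENNReal.toReal_div]; norm_num
      rw [htr]
      have hpt : ∀ x, (‖ρ t x‖₊ : ℝ≥0∞) ^ ((6:ℝ)/5) ≤
          ENNReal.ofReal (Cb ^ ((1:ℝ)/5)) * (‖ρ t x‖₊ : ℝ≥0∞) := by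
        intro x
        have hx0 := (hρbd t ht' x).1
        have hxC := (hρbd t ht' x).2
        have hxe : (‖ρ t x‖₊ : ℝ≥0∞) = ENNReal.ofReal (ρ t x) :=
          Real.enorm_eq_ofReal hx0
        rw [hxe]
        have : ((6:ℝ)/5) = 1/5 + 1 := by norm_num
        rw [this, ENNReal.rpow_add_of_nonneg _ _ (by norm_num) zero_le_one,
          ENNReal.rpow_one]
        calc ENNReal.ofReal (ρ t x) ^ ((1:ℝ)/5) * ENNReal.ofReal (ρ t x)
            ≤ ENNReal.ofReal Cb ^ ((1:ℝ)/5) * ENNReal.ofReal (ρ t x) := by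
              gcongr
          _ = ENNReal.ofReal (Cb ^ ((1:ℝ)/5)) * ENNReal.ofReal (ρ t x) := by
              rw [ENNReal.ofReal_rpow_of_pos hCb]
      calc (∫⁻ x, (‖ρ t x‖₊ : ℝ≥0∞) ^ ((6:ℝ)/5)) ^ ((1:ℝ)/(6/5))
          ≤ (∫⁻ x, ENNReal.ofReal (Cb ^ ((1:ℝ)/5)) * (‖ρ t x‖₊ : ℝ≥0∞)) ^ ((1:ℝ)/(6/5)) := by
            gcongr
            exact hpt _
        _ = (ENNReal.ofReal (Cb ^ ((1:ℝ)/5)) * ∫⁻ x, (‖ρ t x‖₊ : ℝ≥0∞)) ^ ((1:ℝ)/(6/5)) := by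
            rw [lintegral_const_mul' _ _ ENNReal.ofReal_ne_top]
        _ ≤ (ENNReal.ofReal (Cb ^ ((1:ℝ)/5)) * ENNReal.ofReal m) ^ ((1:ℝ)/(6/5)) := by
            gcongr
            have : ∫⁻ x, (‖ρ t x‖₊ : ℝ≥0∞) = ENNReal.ofReal (∫ x, ρ t x) := by
              rw [ofReal_integral_eq_lintegral_ofReal (hρint t ht')
                (Filter.Eventually.of_forall fun x => (hρbd t ht' x).1)]
              refine lintegral_congr fun x => Real.enorm_eq_ofReal (hρbd t ht' x).1
            rw [this, hmass t ht', hm]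
        _ = ENNReal.ofReal ((Cb ^ ((1:ℝ)/5) * m) ^ ((5:ℝ)/6)) := by
            rw [← ENNReal.ofReal_mul (Real.rpow_nonneg hCb.le _),
              ← ENNReal.ofReal_rpow_of_nonneg
                (mul_nonneg (Real.rpow_nonneg hCb.le _) hm0) (by norm_num)]
            norm_num
    -- Hölder
    have hpqr : (1:ℝ≥0∞)/1 = 1/(6/5) + 1/6 := by
      rw [one_div ((6:ℝ≥0∞)/5), ENNReal.inv_div (by norm_num) (by norm_num)]
      rw [ENNReal.div_add_div_same]
      norm_num
      rw [ENNReal.div_self (by norm_num) (by norm_num)]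
    haveI : HolderTriple (6/5) 6 1 := ⟨by simpa only [one_div, div_one, inv_one] using hpqr.symm⟩
    have holder := eLpNorm_smul_le_mul_eLpNorm (f := u t) (φ := ρ t) (p := 6/5) (q := 6) (r := 1) hum hρm
    have hfin : eLpNorm (ρ t) (6/5) volume * eLpNorm (u t) 6 volume ≠ ∞ :=
      ENNReal.mul_ne_top (lt_of_le_of_lt hρLp ENNReal.ofReal_lt_top).ne
        (hu6 t ht').eLpNorm_ne_top
    have h1 : M = ‖∫ x, ρ t x • u t x‖ := by rw [hM, hmom t ht]
    have h2 : ‖∫ x, ρ t x • u t x‖ ≤ (eLpNorm (fun x => ρ t x • u t x) 1 volume).toReal := by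
      rw [eLpNorm_one_eq_lintegral_enorm]
      calc ‖∫ x, ρ t x • u t x‖ ≤ ∫ x, ‖ρ t x • u t x‖ := norm_integral_le_integral_norm _
        _ = (∫⁻ x, (‖ρ t x • u t x‖₊ : ℝ≥0∞)).toReal := by
            rw [integral_norm_eq_lintegral_enorm (hmomint t ht').1]; rfl
    have h3 : (eLpNorm (fun x => ρ t x • u t x) 1 volume).toReal ≤
        ((eLpNorm (ρ t) (6/5) volume) * (eLpNorm (u t) 6 volume)).toReal := by
      apply ENNReal.toReal_mono hfin
      exact holder
    rw [ENNReal.toReal_mul] at h3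
    have h4 : (eLpNorm (ρ t) (6/5) volume).toReal ≤ (Cb ^ ((1:ℝ)/5) * m) ^ ((5:ℝ)/6) := by
      refine le_trans (ENNReal.toReal_mono ENNReal.ofReal_ne_top hρLp) ?_
      exact (ENNReal.toReal_ofReal
        (Real.rpow_nonneg (mul_nonneg (Real.rpow_nonneg hCb.le _) hm0) _)).le
    calc M ≤ (eLpNorm (ρ t) (6/5) volume).toReal * (eLpNorm (u t) 6 volume).toReal := by
          rw [h1]; exact h2.trans h3
      _ ≤ (Cb ^ ((1:ℝ)/5) * m) ^ ((5:ℝ)/6) * (CS * Du t) := by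
          apply mul_le_mul h4 (hSob t ht') ENNReal.toReal_nonneg
          exact Real.rpow_nonneg (mul_nonneg (Real.rpow_nonneg hCb.le _) hm0) _
      _ = K * Du t := by rw [hK]; ring
  -- conclusion
  by_contra hne
  have hMpos : 0 < M := norm_pos_iff.mpr hne
  have hKpos : 0 < K := by
    by_contra h
    push_neg at h
    have := key 1 one_pos
    nlinarith [hDu0 1]
  have hconst : Integrable (fun _ : ℝ => (M/K)^2) (volume.restrict (Ioi (0:ℝ))) := by
    refine hDuint.mono' aestronglyMeasurable_const ?_
    filter_upwards [ae_restrict_mem measurableSet_Ioi] with t ht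
    have h1 : M / K ≤ Du t := (div_le_iff₀ hKpos).2 (by linarith [key t ht, mul_comm K (Du t)])
    have h2 : 0 ≤ M / K := div_nonneg hMpos.le hKpos.le
    rw [Real.norm_eq_abs, abs_of_nonneg (by positivity)]
    nlinarith
  rw [integrable_const_iff] at hconst
  rcases hconst with h | h
  · exact (pow_ne_zero 2 (div_pos hMpos hKpos).ne') h
  · have h' := h.measure_univ_lt_top
    simp [Measure.restrict_apply_univ, Real.volume_Ioi] at h'
end

section
/- Let ρ ≥ 0, θ ≥ 0 with ρ θ measurable, and suppose 0 ≤ ρ ≤ C_b, ρ(·,t) ∈ L¹(ℝ³) with ∫ρ = ∫ρ₀ for all t, ∫₀^∞ (‖∇u‖²_{L²} + ‖∇θ‖²_{L²}) dt ≤ 2C_b², and the Sobolev inequalities ‖u‖_{L⁶} ≤ C‖∇u‖_{L²}, ‖θ‖_{L⁶} ≤ C‖∇θ‖_{L²} hold for each t. If the energy ∫_{ℝ³}(ρ|u|²/2 + ρθ) dx is constant in t, then its common value is zero. -/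
open Set MeasureTheory
open scoped ENNReal

lemma memLp6_aux {α : Type*} [MeasurableSpace α] {μ : Measure α} {F : Type*}
    [NormedAddCommGroup F] {f : α → F} (hf : MemLp f 6 μ) :
    Integrable (fun x => ‖f x‖ ^ (6:ℕ)) μ ∧
      (∫ x, ‖f x‖ ^ (6:ℕ) ∂μ) = (eLpNorm f 6 μ).toReal ^ (6:ℕ) := by
  have h0 : (6 : ℝ≥0∞) ≠ 0 := by norm_num
  have ht : (6 : ℝ≥0∞) ≠ ∞ := by norm_num
  have htr : ((6:ℝ≥0∞)).toReal = (6:ℝ) := by norm_num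
  have heq : (fun x => ‖f x‖ ^ ((6:ℝ≥0∞)).toReal) = fun x => ‖f x‖ ^ (6:ℕ) := by
    funext x
    rw [htr, ← Real.rpow_natCast]
    norm_num
  have hint := hf.integrable_norm_rpow h0 ht
  rw [heq] at hint
  refine ⟨hint, ?_⟩
  have hs := hf.eLpNorm_eq_integral_rpow_norm h0 ht
  set I : ℝ := ∫ x, ‖f x‖ ^ ((6:ℝ≥0∞)).toReal ∂μ with hIdef
  have hI : 0 ≤ I := by
    apply integral_nonneg
    intro x
    positivity
  have h1 : (eLpNorm f 6 μ).toReal = I ^ (((6:ℝ≥0∞)).toReal)⁻¹ := by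
    rw [hs, ENNReal.toReal_ofReal (by positivity)]
  rw [h1]
  have : (I ^ (((6:ℝ≥0∞)).toReal)⁻¹) ^ (6:ℕ) = I := by
    rw [← Real.rpow_natCast (I ^ (((6:ℝ≥0∞)).toReal)⁻¹) 6, ← Real.rpow_mul hI]
    norm_num
  rw [this, hIdef, ← heq]

lemma exists_small_time {f : ℝ → ℝ} (hf : IntegrableOn f (Ioi (0:ℝ)) volume)
    {δ : ℝ} (hδ : 0 < δ) : ∃ t : ℝ, 0 < t ∧ f t < δ := by
  by_contra h
  push_neg at h
  have hconst : Integrable (fun _ : ℝ => δ) (volume.restrict (Ioi (0:ℝ))) := by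
    refine hf.mono' aestronglyMeasurable_const ?_
    filter_upwards [ae_restrict_mem measurableSet_Ioi] with t ht
    rw [Real.norm_of_nonneg hδ.le]
    exact h t ht
  rw [integrable_const_iff] at hconst
  rcases hconst with h1 | h2
  · exact hδ.ne' h1
  · have h2 := h2.measure_univ_lt_top
    rw [Measure.restrict_apply_univ, Real.volume_Ioi] at h2
    exact (lt_irrefl _ h2).elim

lemma arith1 {eps M R : ℝ} (heps : 0 < eps) (hM0 : 0 ≤ M) (hR0 : 0 < R)
    (hR1 : R ≤ 1) (hRe : R ≤ eps / (3 * (M + 1))) : (R ^ 2 / 2 + R) * M ≤ eps / 2 := by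
  have h : R * (3 * (M + 1)) ≤ eps := (le_div_iff₀ (by positivity)).mp hRe
  nlinarith [mul_nonneg (mul_nonneg hR0.le (by linarith : (0:ℝ) ≤ 1 - R)) hM0,
    mul_nonneg hR0.le hM0]

lemma arith2 {eps K d : ℝ} (hK0 : 0 < K) (hd : d ≤ eps / (2 * K)) : K * d ≤ eps / 2 := by
  have h1 : K * d ≤ K * (eps / (2 * K)) := mul_le_mul_of_nonneg_left hd hK0.le
  have h2 : K * (eps / (2 * K)) = eps / 2 := by
    field_simp
  linarith


/-- Proposition 5.1, energy case: a globally bounded solution conserving mass and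
energy, with Dirichlet energies integrable in time, must have zero total energy. -/
theorem conserved_energy_zero
    (Cb CS Ev : ℝ) (hCb : 0 < Cb) (hCS : 0 < CS)
    (ρ : ℝ → E3 → ℝ) (u : ℝ → E3 → E3) (θ : ℝ → E3 → ℝ) (ρ0 : E3 → ℝ)
    (hρbd : ∀ t : ℝ, 0 ≤ t → ∀ x : E3, 0 ≤ ρ t x ∧ ρ t x ≤ Cb)
    (hθ0 : ∀ t : ℝ, 0 ≤ t → ∀ x : E3, 0 ≤ θ t x)
    (hρ0int : Integrable ρ0 volume)
    (hρint : ∀ t : ℝ, 0 ≤ t → Integrable (ρ t) volume)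
    (hmass : ∀ t : ℝ, 0 ≤ t → (∫ x, ρ t x) = ∫ x, ρ0 x)
    (Du Dθ : ℝ → ℝ) (hDu0 : ∀ t, 0 ≤ Du t) (hDθ0 : ∀ t, 0 ≤ Dθ t)
    (hDint : IntegrableOn (fun t => (Du t) ^ 2 + (Dθ t) ^ 2) (Ioi (0:ℝ)) volume)
    (hD : (∫ t in Ioi (0:ℝ), ((Du t) ^ 2 + (Dθ t) ^ 2)) ≤ 2 * Cb ^ 2)
    (hu6 : ∀ t : ℝ, 0 ≤ t → MemLp (u t) 6 volume)
    (hθ6 : ∀ t : ℝ, 0 ≤ t → MemLp (θ t) 6 volume)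
    (hSobu : ∀ t : ℝ, 0 ≤ t → (eLpNorm (u t) 6 volume).toReal ≤ CS * Du t)
    (hSobθ : ∀ t : ℝ, 0 ≤ t → (eLpNorm (θ t) 6 volume).toReal ≤ CS * Dθ t)
    (hEint : ∀ t : ℝ, 0 ≤ t →
      Integrable (fun x => ρ t x * ‖u t x‖ ^ 2 / 2 + ρ t x * θ t x) volume)
    (hE : ∀ t : ℝ, 0 ≤ t →
      (∫ x, (ρ t x * ‖u t x‖ ^ 2 / 2 + ρ t x * θ t x)) = Ev) :
    Ev = 0 := by
  set M : ℝ := ∫ x, ρ0 x with hM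
  have hM0 : 0 ≤ M := by
    rw [← hmass 0 le_rfl]
    exact integral_nonneg fun x => (hρbd 0 le_rfl x).1
  have hEv0 : 0 ≤ Ev := by
    rw [← hE 0 le_rfl]
    refine integral_nonneg fun x => ?_
    have h1 := (hρbd 0 le_rfl x).1
    have h2 := hθ0 0 le_rfl x
    positivity
  have key : ∀ ε : ℝ, 0 < ε → Ev ≤ ε := by
    intro ε hε
    set R : ℝ := min 1 (ε / (3 * (M + 1))) with hR
    have hR0 : 0 < R := lt_min one_pos (by positivity)
    have hR1 : R ≤ 1 := min_le_left _ _
    have hRε : R ≤ ε / (3 * (M + 1)) := min_le_right _ _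
    set K : ℝ := Cb * CS ^ 6 * (1 / (2 * R ^ 4) + 1 / R ^ 5) with hK
    have hK0 : 0 < K := by positivity
    set δ : ℝ := min 1 (ε / (2 * K)) with hδ
    have hδ0 : 0 < δ := lt_min one_pos (by positivity)
    have hδ1 : δ ≤ 1 := min_le_left _ _
    have hδε : δ ≤ ε / (2 * K) := min_le_right _ _
    obtain ⟨t, ht0, htδ⟩ := exists_small_time hDint hδ0
    have ht : (0:ℝ) ≤ t := ht0.le
    obtain ⟨hintu, hequ⟩ := memLp6_aux (hu6 t ht)
    obtain ⟨hintθ, heqθ⟩ := memLp6_aux (hθ6 t ht)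
    have hu6b : (∫ x, ‖u t x‖ ^ (6:ℕ)) ≤ (CS * Du t) ^ (6:ℕ) := by
      rw [hequ]
      exact pow_le_pow_left₀ ENNReal.toReal_nonneg (hSobu t ht) 6
    have hθ6b : (∫ x, ‖θ t x‖ ^ (6:ℕ)) ≤ (CS * Dθ t) ^ (6:ℕ) := by
      rw [heqθ]
      exact pow_le_pow_left₀ ENNReal.toReal_nonneg (hSobθ t ht) 6
    -- pointwise bound
    have hpt : ∀ x : E3, ρ t x * ‖u t x‖ ^ 2 / 2 + ρ t x * θ t x ≤
        (R ^ 2 / 2 + R) * ρ t x + (Cb / (2 * R ^ 4)) * ‖u t x‖ ^ (6:ℕ)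
          + (Cb / R ^ 5) * ‖θ t x‖ ^ (6:ℕ) := by
      intro x
      obtain ⟨h1, h2⟩ := hρbd t ht x
      have h3 := hθ0 t ht x
      have hn : (0:ℝ) ≤ ‖u t x‖ := norm_nonneg _
      have hθn : ‖θ t x‖ = θ t x := Real.norm_of_nonneg h3
      rw [hθn]
      have A : ρ t x * ‖u t x‖ ^ 2 / 2 ≤
          R ^ 2 / 2 * ρ t x + (Cb / (2 * R ^ 4)) * ‖u t x‖ ^ 6 := by
        have hpos2 : (0:ℝ) ≤ (Cb / (2 * R ^ 4)) * ‖u t x‖ ^ 6 := by positivity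
        have hpos1 : (0:ℝ) ≤ R ^ 2 / 2 * ρ t x := by positivity
        rcases le_or_gt ‖u t x‖ R with hc | hc
        · have h4 : ‖u t x‖ ^ 2 ≤ R ^ 2 := pow_le_pow_left₀ hn hc 2
          have : ρ t x * ‖u t x‖ ^ 2 / 2 ≤ ρ t x * R ^ 2 / 2 := by
            have := mul_le_mul_of_nonneg_left h4 h1
            linarith
          linarith [this]
        · have h4 : ‖u t x‖ ^ 2 * R ^ 4 ≤ ‖u t x‖ ^ 6 := by
            have h5 : R ^ 4 ≤ ‖u t x‖ ^ 4 := pow_le_pow_left₀ hR0.le hc.le 4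
            calc ‖u t x‖ ^ 2 * R ^ 4 ≤ ‖u t x‖ ^ 2 * ‖u t x‖ ^ 4 :=
                  mul_le_mul_of_nonneg_left h5 (by positivity)
              _ = ‖u t x‖ ^ 6 := by ring
          have hs1 : ρ t x * ‖u t x‖ ^ 2 / 2 ≤ Cb * ‖u t x‖ ^ 2 / 2 := by
            have := mul_le_mul_of_nonneg_right h2 (sq_nonneg ‖u t x‖)
            linarith
          have hs2 : Cb * ‖u t x‖ ^ 2 / 2 = (Cb / (2 * R ^ 4)) * (‖u t x‖ ^ 2 * R ^ 4) := by
            field_simp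
          have hs3 : (Cb / (2 * R ^ 4)) * (‖u t x‖ ^ 2 * R ^ 4) ≤
              (Cb / (2 * R ^ 4)) * ‖u t x‖ ^ 6 :=
            mul_le_mul_of_nonneg_left h4 (by positivity)
          linarith
      have B : ρ t x * θ t x ≤ R * ρ t x + (Cb / R ^ 5) * θ t x ^ 6 := by
        have hpos2 : (0:ℝ) ≤ (Cb / R ^ 5) * θ t x ^ 6 := by positivity
        have hpos1 : (0:ℝ) ≤ R * ρ t x := by positivity
        rcases le_or_gt (θ t x) R with hc | hc
        · have : ρ t x * θ t x ≤ ρ t x * R := mul_le_mul_of_nonneg_left hc h1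
          linarith [this]
        · have h4 : θ t x * R ^ 5 ≤ θ t x ^ 6 := by
            have h5 : R ^ 5 ≤ θ t x ^ 5 := pow_le_pow_left₀ hR0.le hc.le 5
            calc θ t x * R ^ 5 ≤ θ t x * θ t x ^ 5 :=
                  mul_le_mul_of_nonneg_left h5 h3
              _ = θ t x ^ 6 := by ring
          have hs1 : ρ t x * θ t x ≤ Cb * θ t x := mul_le_mul_of_nonneg_right h2 h3
          have hs2 : Cb * θ t x = (Cb / R ^ 5) * (θ t x * R ^ 5) := by
            field_simp
          have hs3 : (Cb / R ^ 5) * (θ t x * R ^ 5) ≤ (Cb / R ^ 5) * θ t x ^ 6 :=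
            mul_le_mul_of_nonneg_left h4 (by positivity)
          linarith
      linarith
    -- integrate the pointwise bound
    have hI1 : Integrable (fun x => (R ^ 2 / 2 + R) * ρ t x) volume :=
      (hρint t ht).const_mul _
    have hI2 : Integrable (fun x => (Cb / (2 * R ^ 4)) * ‖u t x‖ ^ (6:ℕ)) volume :=
      hintu.const_mul _
    have hI3 : Integrable (fun x => (Cb / R ^ 5) * ‖θ t x‖ ^ (6:ℕ)) volume :=
      hintθ.const_mul _
    have hI12 : Integrable (fun x => (R ^ 2 / 2 + R) * ρ t x
        + (Cb / (2 * R ^ 4)) * ‖u t x‖ ^ (6:ℕ)) volume := hI1.add hI2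
    have hI123 : Integrable (fun x => (R ^ 2 / 2 + R) * ρ t x
        + (Cb / (2 * R ^ 4)) * ‖u t x‖ ^ (6:ℕ) + (Cb / R ^ 5) * ‖θ t x‖ ^ (6:ℕ)) volume :=
      hI12.add hI3
    have hle : Ev ≤ ∫ x, ((R ^ 2 / 2 + R) * ρ t x
        + (Cb / (2 * R ^ 4)) * ‖u t x‖ ^ (6:ℕ) + (Cb / R ^ 5) * ‖θ t x‖ ^ (6:ℕ)) := by
      rw [← hE t ht]
      exact integral_mono (hEint t ht) hI123 hpt
    rw [integral_add hI12 hI3, integral_add hI1 hI2,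
      integral_const_mul, integral_const_mul, integral_const_mul, hmass t ht] at hle
    -- small quantities
    have hDu2 : Du t ^ 2 ≤ δ := by linarith [sq_nonneg (Dθ t)]
    have hDθ2 : Dθ t ^ 2 ≤ δ := by linarith [sq_nonneg (Du t)]
    have hδ3 : δ ^ 3 ≤ δ := by
      have := pow_le_pow_of_le_one hδ0.le hδ1 (show 1 ≤ 3 by norm_num)
      simpa using this
    have hDu6 : Du t ^ 6 ≤ δ := by
      calc Du t ^ 6 = (Du t ^ 2) ^ 3 := by ring
        _ ≤ δ ^ 3 := pow_le_pow_left₀ (sq_nonneg _) hDu2 3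
        _ ≤ δ := hδ3
    have hDθ6 : Dθ t ^ 6 ≤ δ := by
      calc Dθ t ^ 6 = (Dθ t ^ 2) ^ 3 := by ring
        _ ≤ δ ^ 3 := pow_le_pow_left₀ (sq_nonneg _) hDθ2 3
        _ ≤ δ := hδ3
    -- first term ≤ ε/2
    have hterm1 : (R ^ 2 / 2 + R) * M ≤ ε / 2 := arith1 hε hM0 hR0 hR1 hRε
    -- second term ≤ ε/2
    have hterm2 : (Cb / (2 * R ^ 4)) * (CS * Du t) ^ (6:ℕ)
        + (Cb / R ^ 5) * (CS * Dθ t) ^ (6:ℕ) ≤ ε / 2 := by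
      have e1 : (CS * Du t) ^ (6:ℕ) = CS ^ 6 * Du t ^ 6 := by ring
      have e2 : (CS * Dθ t) ^ (6:ℕ) = CS ^ 6 * Dθ t ^ 6 := by ring
      rw [e1, e2]
      have c1 : (Cb / (2 * R ^ 4)) * (CS ^ 6 * Du t ^ 6) ≤
          (Cb / (2 * R ^ 4)) * (CS ^ 6 * δ) :=
        mul_le_mul_of_nonneg_left
          (mul_le_mul_of_nonneg_left hDu6 (by positivity)) (by positivity)
      have c2 : (Cb / R ^ 5) * (CS ^ 6 * Dθ t ^ 6) ≤ (Cb / R ^ 5) * (CS ^ 6 * δ) :=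
        mul_le_mul_of_nonneg_left
          (mul_le_mul_of_nonneg_left hDθ6 (by positivity)) (by positivity)
      have csum : (Cb / (2 * R ^ 4)) * (CS ^ 6 * δ) + (Cb / R ^ 5) * (CS ^ 6 * δ) = K * δ := by
        rw [hK]
        ring
      have hKδ : K * δ ≤ ε / 2 := arith2 hK0 hδε
      linarith
    have hmid : (Cb / (2 * R ^ 4)) * (∫ x, ‖u t x‖ ^ (6:ℕ))
        + (Cb / R ^ 5) * (∫ x, ‖θ t x‖ ^ (6:ℕ))
        ≤ (Cb / (2 * R ^ 4)) * (CS * Du t) ^ (6:ℕ) + (Cb / R ^ 5) * (CS * Dθ t) ^ (6:ℕ) :=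
      add_le_add (mul_le_mul_of_nonneg_left hu6b (by positivity))
        (mul_le_mul_of_nonneg_left hθ6b (by positivity))
    linarith
  by_contra h
  have hpos : 0 < Ev := lt_of_le_of_ne hEv0 (Ne.symm h)
  have := key (Ev / 2) (by linarith)
  linarith
end

section
/- Let q ∈ (3,6), and let f, g : [0,T] → [0,∞) satisfy ∫₀ᵀ t·f(t)² dt ≤ C and ∫₀ᵀ t·g(t)² dt ≤ C with sup_t t f(t)² ≤ C. Then the function h(t) = f(t)^{(6-q)/(2q)} g(t)^{(3q-6)/(2q)} satisfies h(t) ≤ C' t^{-2q/(q+6)} + C' t g(t)², and in particular h ∈ L¹([0,T]). -/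
open Set MeasureTheory

/-- Estimate (6.18)/(3d-gronwall): for `q ∈ (3,6)`, if `∫ t f², ∫ t g² ≤ C` and
`sup t f² ≤ C`, then `h = f^{(6-q)/(2q)} g^{(3q-6)/(2q)}` satisfies
`h(t) ≤ C' t^{-2q/(q+6)} + C' t g(t)²` and hence `h ∈ L¹(0,T)`. -/
theorem interpolated_time_integrable (T C q : ℝ) (hT : 0 < T) (hC : 0 ≤ C)
    (hq3 : 3 < q) (hq6 : q < 6)
    (f g : ℝ → ℝ) (hf0 : ∀ t, 0 ≤ f t) (hg0 : ∀ t, 0 ≤ g t)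
    (hfm : Measurable f) (hgm : Measurable g)
    (hfint : IntegrableOn (fun t => t * f t ^ 2) (Ioc (0:ℝ) T) volume)
    (hgint : IntegrableOn (fun t => t * g t ^ 2) (Ioc (0:ℝ) T) volume)
    (hfI : (∫ t in Ioc (0:ℝ) T, t * f t ^ 2) ≤ C)
    (hgI : (∫ t in Ioc (0:ℝ) T, t * g t ^ 2) ≤ C)
    (hsup : ∀ t ∈ Ioc (0:ℝ) T, t * f t ^ 2 ≤ C) :
    ∃ C' : ℝ, 0 < C' ∧
      (∀ t ∈ Ioc (0:ℝ) T,
        f t ^ ((6 - q) / (2 * q)) * g t ^ ((3 * q - 6) / (2 * q)) ≤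
          C' * t ^ (-(2 * q / (q + 6))) + C' * (t * g t ^ 2)) ∧
      IntegrableOn
        (fun t => f t ^ ((6 - q) / (2 * q)) * g t ^ ((3 * q - 6) / (2 * q)))
        (Ioc (0:ℝ) T) volume := by
  have hq0 : (0:ℝ) < q := by linarith
  set α := (6 - q) / (2 * q) with hα
  set β := (3 * q - 6) / (2 * q) with hβ
  have hα0 : 0 < α := div_pos (by linarith) (by linarith)
  have hβ0 : 0 < β := div_pos (by linarith) (by linarith)
  have hβ1 : β < 1 := by
    rw [hβ, div_lt_one (by linarith)]; linarith
  have hαβ : α + β = 1 := by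
    rw [hα, hβ]; field_simp; ring
  -- conjugate exponents
  have hconj : (2 / β).HolderConjugate (2 / (2 - β)) := by
    rw [Real.holderConjugate_iff]; constructor
    · rw [lt_div_iff₀ hβ0]; linarith
    · rw [inv_div, inv_div]; field_simp; ring
  have hrexp : 1 / (2 - β) = 2 * q / (q + 6) := by
    rw [hβ]; rw [div_eq_div_iff (by nlinarith) (by linarith)]
    field_simp; ring
  set C' := (C + 1) ^ (α / 2) + 1 with hC'
  have hC'pos : 0 < C' := by positivity
  have key : ∀ t ∈ Ioc (0:ℝ) T,
      f t ^ α * g t ^ β ≤ C' * t ^ (-(2 * q / (q + 6))) + C' * (t * g t ^ 2) := by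
    intro t ht
    obtain ⟨ht0, htT⟩ := ht
    set X := t * g t ^ 2 with hX
    have hX0 : 0 ≤ X := by positivity
    -- bound on f t ^ α
    have hfb : f t ^ α ≤ (C + 1) ^ (α / 2) * t ^ (-(α / 2)) := by
      have h1 : f t ≤ ((C + 1) / t) ^ ((1:ℝ) / 2) := by
        have h2 : f t ^ 2 ≤ (C + 1) / t := by
          rw [le_div_iff₀ ht0]
          have := hsup t ⟨ht0, htT⟩
          nlinarith [hg0 t]
        have h3 : (f t ^ 2 : ℝ) ^ ((1:ℝ)/2) ≤ ((C + 1) / t) ^ ((1:ℝ)/2) :=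
          Real.rpow_le_rpow (by positivity) h2 (by norm_num)
        calc f t = (f t ^ 2 : ℝ) ^ ((1:ℝ)/2) := by
                rw [← Real.rpow_natCast (f t) 2, ← Real.rpow_mul (hf0 t)]
                norm_num
          _ ≤ _ := h3
      calc f t ^ α ≤ (((C + 1) / t) ^ ((1:ℝ)/2)) ^ α :=
            Real.rpow_le_rpow (hf0 t) h1 hα0.le
        _ = ((C + 1) / t) ^ (α / 2) := by
            rw [← Real.rpow_mul (by positivity)]; ring_nf
        _ = (C + 1) ^ (α / 2) * t ^ (-(α / 2)) := by
            rw [Real.div_rpow (by linarith) ht0.le, Real.rpow_neg ht0.le, div_eq_mul_inv]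
    -- identity for g t ^ β
    have hgb : g t ^ β = X ^ (β / 2) * t ^ (-(β / 2)) := by
      have h2 : g t ^ 2 = X / t := by rw [hX]; field_simp
      calc g t ^ β = ((g t ^ 2 : ℝ) ^ ((1:ℝ)/2)) ^ β := by
            rw [← Real.rpow_natCast (g t) 2, ← Real.rpow_mul (hg0 t),
              ← Real.rpow_mul (hg0 t)]
            norm_num
        _ = (X / t) ^ (β / 2) := by
            rw [h2, ← Real.rpow_mul (by positivity)]; ring_nf
        _ = X ^ (β / 2) * t ^ (-(β / 2)) := by
            rw [Real.div_rpow hX0 ht0.le, Real.rpow_neg ht0.le, div_eq_mul_inv]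
    have hmain : f t ^ α * g t ^ β ≤ (C + 1) ^ (α / 2) * (X ^ (β / 2) * t ^ (-(1:ℝ)/2)) := by
      calc f t ^ α * g t ^ β
          ≤ ((C + 1) ^ (α / 2) * t ^ (-(α / 2))) * (X ^ (β / 2) * t ^ (-(β / 2))) := by
            apply mul_le_mul hfb (le_of_eq hgb) (Real.rpow_nonneg (hg0 t) _) (by positivity)
        _ = (C + 1) ^ (α / 2) * (X ^ (β / 2) * (t ^ (-(α / 2)) * t ^ (-(β / 2)))) := by ring
        _ = (C + 1) ^ (α / 2) * (X ^ (β / 2) * t ^ (-(1:ℝ)/2)) := by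
            rw [← Real.rpow_add ht0]
            congr 2
            rw [← hαβ]; ring
    have hyoung : X ^ (β / 2) * t ^ (-(1:ℝ)/2) ≤ X + t ^ (-(2 * q / (q + 6))) := by
      have h1 : X ^ (β / 2) * t ^ (-(1:ℝ)/2) ≤
          (X ^ (β / 2)) ^ (2 / β) / (2 / β)
            + (t ^ (-(1:ℝ)/2)) ^ (2 / (2 - β)) / (2 / (2 - β)) :=
        Real.young_inequality_of_nonneg (Real.rpow_nonneg hX0 _)
          (Real.rpow_nonneg ht0.le _) hconj
      have h2 : (X ^ (β / 2)) ^ (2 / β) = X := by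
        rw [← Real.rpow_mul hX0]
        rw [show β / 2 * (2 / β) = 1 by field_simp]
        exact Real.rpow_one X
      have h3 : (t ^ (-(1:ℝ)/2)) ^ (2 / (2 - β)) = t ^ (-(2 * q / (q + 6))) := by
        rw [← Real.rpow_mul ht0.le, ← hrexp]
        congr 1
        field_simp
      have hp1 : (1:ℝ) ≤ 2 / β := hconj.lt.le
      have hp2 : (1:ℝ) ≤ 2 / (2 - β) := hconj.symm.lt.le
      have h4 : (X ^ (β / 2)) ^ (2 / β) / (2 / β) ≤ X := by
        rw [h2]; exact div_le_self hX0 hp1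
      have h5 : (t ^ (-(1:ℝ)/2)) ^ (2 / (2 - β)) / (2 / (2 - β)) ≤ t ^ (-(2 * q / (q + 6))) := by
        rw [h3]; exact div_le_self (Real.rpow_nonneg ht0.le _) hp2
      linarith
    have hCle : (C + 1) ^ (α / 2) ≤ C' := by rw [hC']; linarith
    calc f t ^ α * g t ^ β
        ≤ (C + 1) ^ (α / 2) * (X ^ (β / 2) * t ^ (-(1:ℝ)/2)) := hmain
      _ ≤ (C + 1) ^ (α / 2) * (X + t ^ (-(2 * q / (q + 6)))) := by
          apply mul_le_mul_of_nonneg_left hyoung (by positivity)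
      _ ≤ C' * (X + t ^ (-(2 * q / (q + 6)))) := by
          apply mul_le_mul_of_nonneg_right hCle
          have : (0:ℝ) ≤ t ^ (-(2 * q / (q + 6))) := Real.rpow_nonneg ht0.le _
          linarith
      _ = C' * t ^ (-(2 * q / (q + 6))) + C' * X := by ring
  refine ⟨C', hC'pos, key, ?_⟩
  -- integrability
  have hrneg : (-1:ℝ) < -(2 * q / (q + 6)) := by
    have : 2 * q / (q + 6) < 1 := by
      rw [div_lt_one (by linarith)]; linarith
    linarith
  have hrint : IntegrableOn (fun t : ℝ => t ^ (-(2 * q / (q + 6)))) (Ioc (0:ℝ) T) volume := by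
    have := intervalIntegral.intervalIntegrable_rpow' (a := 0) (b := T) hrneg
    rwa [intervalIntegrable_iff_integrableOn_Ioc_of_le hT.le] at this
  have hbint : IntegrableOn
      (fun t : ℝ => C' * t ^ (-(2 * q / (q + 6))) + C' * (t * g t ^ 2)) (Ioc (0:ℝ) T) volume :=
    (hrint.const_mul C').add (hgint.const_mul C')
  have hmeas : Measurable (fun t => f t ^ α * g t ^ β) :=
    ((Real.continuous_rpow_const hα0.le).measurable.comp hfm).mul
      ((Real.continuous_rpow_const hβ0.le).measurable.comp hgm)
  apply hbint.mono' hmeas.aestronglyMeasurable.restrict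
  rw [ae_restrict_iff' measurableSet_Ioc]
  filter_upwards with t ht
  rw [Real.norm_of_nonneg (mul_nonneg (Real.rpow_nonneg (hf0 t) _) (Real.rpow_nonneg (hg0 t) _))]
  exact key t ht
end
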